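/- There exist a constant ε ∈ (0,1) and an infinite binary string S (over the alphabet {0,1}) that is an infinite weak ε-synchronization string, i.e., for all 1 ≤ i < j < k, ED(S[i,j), S[j,k)) ≥ ⌊(1−ε)(k−i)⌋. -/

import Mathlib

/-- The length of a longest common subsequence of two strings (lists). -/
noncomputable def lcsLen {α : Type*} (S T : List α) : ℕ :=
  sSup {n | ∃ U : List α, U.length = n ∧ U.Sublist S ∧ U.Sublist T}

/-- The edit distance (insertions/deletions) between two strings, via
`ED(S,T) = |S| + |T| - 2·LCS(S,T)`. -/
noncomputable def editDistance {α : Type*} (S T : List α) : ℕ :=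
  S.length + T.length - 2 * lcsLen S T

/-- `strSlice S a b` is the substring `S[a, b)` of `S` (1-indexed, `b` excluded). -/
def strSlice {α : Type*} (S : List α) (a b : ℕ) : List α :=
  (S.drop (a - 1)).take (b - a)

/-- `islice f a b` is the substring `f[a, b)` of the infinite string `f`
(1-indexed, `b` excluded). -/
def islice {α : Type*} (f : ℕ → α) (a b : ℕ) : List α :=
  (List.range (b - a)).map fun t => f (a + t)

/-- `S` is an ε-synchronization string: for all `1 ≤ i < j < k ≤ |S| + 1`,
`ED(S[i,j), S[j,k)) > (1-ε)(k-i)`. -/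
def IsSyncString {α : Type*} (ε : ℝ) (S : List α) : Prop :=
  ∀ i j k : ℕ, 1 ≤ i → i < j → j < k → k ≤ S.length + 1 →
    (1 - ε) * ((k : ℝ) - (i : ℝ)) < (editDistance (strSlice S i j) (strSlice S j k) : ℝ)

/-- `S` is an ε-synchronization circle: every cyclic rotation of `S` is an
ε-synchronization string. -/
def IsSyncCircle {α : Type*} (ε : ℝ) (S : List α) : Prop :=
  ∀ i : ℕ, 1 ≤ i → i ≤ S.length → IsSyncString ε (S.rotate (i - 1))

/-- An infinite ε-synchronization string (1-indexed). -/
def IsInfSyncString {α : Type*} (ε : ℝ) (f : ℕ → α) : Prop :=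
  ∀ i j k : ℕ, 1 ≤ i → i < j → j < k →
    (1 - ε) * ((k : ℝ) - (i : ℝ)) < (editDistance (islice f i j) (islice f j k) : ℝ)

/-- `S` is a `c`-long-distance ε-synchronization string: for all
`1 ≤ i < j ≤ i' < j' ≤ |S| + 1` with `l = (j-i)+(j'-i')`, if the two intervals
are adjacent (`i' = j`) or `l > c · log |S|`, then
`ED(S[i,j), S[i',j')) > (1-ε)·l`. -/
noncomputable def IsLongDistSyncString {α : Type*} (c ε : ℝ) (S : List α) : Prop :=
  ∀ i j i' j' : ℕ, 1 ≤ i → i < j → j ≤ i' → i' < j' → j' ≤ S.length + 1 →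
    (i' = j ∨ c * Real.log (S.length : ℝ) < ((j : ℝ) - i) + ((j' : ℝ) - i')) →
    (1 - ε) * (((j : ℝ) - i) + ((j' : ℝ) - i')) <
      (editDistance (strSlice S i j) (strSlice S i' j') : ℝ)

/-- An infinite weak ε-synchronization string: for all `1 ≤ i < j < k`,
`ED(S[i,j), S[j,k)) ≥ ⌊(1-ε)(k-i)⌋`. -/
def IsInfWeakSyncString {α : Type*} (ε : ℝ) (f : ℕ → α) : Prop :=
  ∀ i j k : ℕ, 1 ≤ i → i < j → j < k →
    ((⌊(1 - ε) * ((k : ℝ) - (i : ℝ))⌋ : ℤ) : ℝ) ≤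
      (editDistance (islice f i j) (islice f j k) : ℝ)

/- ----------------------------------------------------------------
   Auxiliary development
---------------------------------------------------------------- -/

namespace WeakSyncAux

open List Finset

/-! ### Basic facts about `lcsLen` and `editDistance` -/

lemma lcs_set_nonempty {α : Type*} (S T : List α) :
    {n | ∃ U : List α, U.length = n ∧ U.Sublist S ∧ U.Sublist T}.Nonempty :=
  ⟨0, [], rfl, List.nil_sublist _, List.nil_sublist _⟩

lemma lcs_set_bdd {α : Type*} (S T : List α) :
    BddAbove {n | ∃ U : List α, U.length = n ∧ U.Sublist S ∧ U.Sublist T} := by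
  refine ⟨S.length, fun n hn => ?_⟩
  obtain ⟨U, hU, hS, _⟩ := hn
  exact hU ▸ hS.length_le

lemma exists_lcs {α : Type*} (S T : List α) :
    ∃ U : List α, U.length = lcsLen S T ∧ U.Sublist S ∧ U.Sublist T :=
  Nat.sSup_mem (lcs_set_nonempty S T) (lcs_set_bdd S T)

lemma le_lcsLen {α : Type*} {S T U : List α} (h1 : U.Sublist S) (h2 : U.Sublist T) :
    U.length ≤ lcsLen S T :=
  le_csSup (lcs_set_bdd S T) ⟨U, rfl, h1, h2⟩

lemma lcsLen_le_left {α : Type*} (S T : List α) : lcsLen S T ≤ S.length := by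
  refine csSup_le (lcs_set_nonempty S T) (fun n hn => ?_)
  obtain ⟨U, hU, hS, _⟩ := hn
  exact hU ▸ hS.length_le

lemma lcsLen_le_right {α : Type*} (S T : List α) : lcsLen S T ≤ T.length := by
  refine csSup_le (lcs_set_nonempty S T) (fun n hn => ?_)
  obtain ⟨U, hU, _, hT⟩ := hn
  exact hU ▸ hT.length_le

lemma editDistance_add : ∀ {α : Type*} (S T : List α),
    editDistance S T + 2 * lcsLen S T = S.length + T.length := by
  intro α S T
  have h1 := lcsLen_le_left S T
  have h2 := lcsLen_le_right S T
  unfold editDistance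
  omega

/-! ### Slice lemmas -/

lemma strSlice_take {α : Type*} (T : List α) (p i j : ℕ) (hi : 1 ≤ i) (h : j ≤ p + 1) :
    strSlice (T.take p) i j = strSlice T i j := by
  unfold strSlice
  rw [List.drop_take, List.take_take, min_eq_left (by omega)]

lemma length_strSlice {α : Type*} (T : List α) (i j : ℕ)
    (h1 : 1 ≤ i) (h3 : j ≤ T.length + 1) : (strSlice T i j).length = j - i := by
  unfold strSlice
  rw [List.length_take, List.length_drop]
  omega

/-! ### The goodness predicate -/

def GoodL (T : List Bool) : Prop :=
  ∀ i j k : ℕ, 1 ≤ i → i < j → j < k → k ≤ T.length + 1 →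
    (k - i) / 100 ≤ editDistance (strSlice T i j) (strSlice T j k)

lemma goodL_nil : GoodL [] := by
  intro i j k h1 h2 h3 h4
  simp only [List.length_nil] at h4
  omega

lemma GoodL.take {T : List Bool} (h : GoodL T) (p : ℕ) : GoodL (T.take p) := by
  intro i j k h1 h2 h3 h4
  rw [List.length_take] at h4
  have hj : j ≤ p + 1 := by omega
  have hk : k ≤ p + 1 := by omega
  rw [strSlice_take T p i j h1 hj, strSlice_take T p j k (by omega) hk]
  exact h i j k h1 h2 h3 (by omega)

/-! ### Finsets of strings -/

def strs : ℕ → Finset (List Bool)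
  | 0 => {[]}
  | n + 1 => ((strs n).image (List.cons false)) ∪ ((strs n).image (List.cons true))

lemma mem_strs : ∀ {n : ℕ} {T : List Bool}, T ∈ strs n ↔ T.length = n := by
  intro n
  induction n with
  | zero => intro T; simp [strs, List.length_eq_zero_iff]
  | succ n ih =>
    intro T
    simp only [strs, Finset.mem_union, Finset.mem_image]
    constructor
    · rintro (⟨a, ha, rfl⟩ | ⟨a, ha, rfl⟩) <;> simp [ih.mp ha]
    · intro hT
      match T with
      | [] => simp at hT
      | c :: T' =>
        have : T' ∈ strs n := ih.mpr (by simpa using hT)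
        cases c
        · exact Or.inl ⟨T', this, rfl⟩
        · exact Or.inr ⟨T', this, rfl⟩

lemma card_strs_le (n : ℕ) : (strs n).card ≤ 2 ^ n := by
  induction n with
  | zero => simp [strs]
  | succ n ih =>
    calc (strs (n+1)).card ≤ ((strs n).image (List.cons false)).card
        + ((strs n).image (List.cons true)).card := Finset.card_union_le _ _
      _ ≤ (strs n).card + (strs n).card :=
        Nat.add_le_add (Finset.card_image_le) (Finset.card_image_le)
      _ ≤ 2 ^ n + 2 ^ n := Nat.add_le_add ih ih
      _ = 2 ^ (n+1) := by ring

open Classical in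
/-- The number of good strings of length `n`. -/
noncomputable def N (n : ℕ) : ℕ := ((strs n).filter GoodL).card

lemma card_le_split (p q : ℕ) (φ ψ : List Bool → Prop)
    [DecidablePred φ] [DecidablePred ψ] (S : Finset (List Bool))
    (hS : ∀ T ∈ S, T.length = p + q ∧ φ (T.take p) ∧ ψ (T.drop p)) :
    S.card ≤ ((strs p).filter φ).card * ((strs q).filter ψ).card := by
  classical
  rw [← Finset.card_product]
  apply Finset.card_le_card_of_injOn (fun T => (T.take p, T.drop p))
  · intro T hT
    obtain ⟨hlen, hφ, hψ⟩ := hS T hT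
    simp only [Finset.mem_coe, Finset.mem_product, Finset.mem_filter, mem_strs]
    refine ⟨⟨?_, hφ⟩, ?_, hψ⟩
    · rw [List.length_take]; omega
    · rw [List.length_drop]; omega
  · intro T1 _ T2 _ heq
    have h1 : T1.take p = T2.take p := congrArg Prod.fst heq
    have h2 : T1.drop p = T2.drop p := congrArg Prod.snd heq
    rw [← List.take_append_drop p T1, ← List.take_append_drop p T2, h1, h2]

lemma sublist_cons_elim {u c : Bool} {U B : List Bool} (h : (u :: U).Sublist (c :: B)) :
    (u :: U).Sublist B ∨ (u = c ∧ U.Sublist B) := by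
  cases h with
  | cons _ h => exact Or.inl h
  | cons_cons _ h => exact Or.inr ⟨rfl, h⟩

open Classical in
/-- Counting strings containing a fixed subsequence. -/
private lemma card_superstrings_le_aux :
    ∀ (b : ℕ) (U : List Bool), ((strs b).filter (fun B => U.Sublist B)).card
      ≤ b.choose U.length * 2 ^ (b - U.length) := by
  intro b
  induction b with
  | zero =>
    intro U
    match U with
    | [] =>
      refine le_trans (Finset.card_filter_le _ _) ?_
      simp [strs]
    | u :: U' =>
      have : ((strs 0).filter (fun B => (u :: U').Sublist B)) = ∅ := by
        rw [Finset.filter_eq_empty_iff]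
        intro B hB
        rw [mem_strs, List.length_eq_zero_iff] at hB
        subst hB
        simp
      simp [this]
  | succ b ih =>
    intro U
    have hsplit : (strs (b+1)).filter (fun B => U.Sublist B) =
        (((strs b).image (List.cons false)).filter (fun B => U.Sublist B)) ∪
        (((strs b).image (List.cons true)).filter (fun B => U.Sublist B)) := by
      show ((((strs b).image (List.cons false)) ∪ ((strs b).image (List.cons true))).filter _) = _
      rw [Finset.filter_union]
    have himg : ∀ c : Bool, (((strs b).image (List.cons c)).filter (fun B => U.Sublist B)).card
        ≤ ((strs b).filter (fun B' => U.Sublist (c :: B'))).card := by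
      intro c
      rw [Finset.filter_image]
      exact Finset.card_image_le
    rw [hsplit]
    refine le_trans (Finset.card_union_le _ _) ?_
    refine le_trans (Nat.add_le_add (himg false) (himg true)) ?_
    match U with
    | [] =>
      have h2 : ∀ c : Bool, ((strs b).filter (fun B' => List.Sublist [] (c :: B'))).card ≤ 2 ^ b :=
        fun c => le_trans (Finset.card_filter_le _ _) (card_strs_le b)
      calc ((strs b).filter (fun B' => List.Sublist [] (false :: B'))).card
            + ((strs b).filter (fun B' => List.Sublist [] (true :: B'))).card
          ≤ 2 ^ b + 2 ^ b := Nat.add_le_add (h2 false) (h2 true)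
        _ ≤ (b+1).choose 0 * 2 ^ (b + 1 - 0) := by
            simp [Nat.choose_zero_right, pow_succ]; ring_nf; omega
    | u :: U' =>
      -- per-letter bound
      have key : ∀ c : Bool, ((strs b).filter (fun B' => (u :: U').Sublist (c :: B'))).card
          ≤ ((strs b).filter (fun B' => (u :: U').Sublist B')).card
            + (if u = c then ((strs b).filter (fun B' => U'.Sublist B')).card else 0) := by
        intro c
        by_cases huc : u = c
        · simp only [huc, if_pos rfl]
          refine le_trans (Finset.card_le_card ?_) (Finset.card_union_le _ _)
          intro B hB
          simp only [Finset.mem_filter] at hB ⊢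
          rcases sublist_cons_elim hB.2 with h | h
          · exact Finset.mem_union_left _ (Finset.mem_filter.mpr ⟨hB.1, h⟩)
          · exact Finset.mem_union_right _ (Finset.mem_filter.mpr ⟨hB.1, h.2⟩)
        · simp only [if_neg huc, Nat.add_zero]
          refine Finset.card_le_card ?_
          intro B hB
          simp only [Finset.mem_filter] at hB ⊢
          rcases sublist_cons_elim hB.2 with h | h
          · exact ⟨hB.1, h⟩
          · exact absurd h.1 huc
      have hu : (if u = false then ((strs b).filter (fun B' => U'.Sublist B')).card else 0)
          + (if u = true then ((strs b).filter (fun B' => U'.Sublist B')).card else 0)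
          = ((strs b).filter (fun B' => U'.Sublist B')).card := by
        cases u <;> simp
      have hF := ih (u :: U')
      have hF' := ih U'
      set l := U'.length with hl
      -- final arithmetic
      have harith : 2 * (b.choose (l+1) * 2 ^ (b - (l+1))) + b.choose l * 2 ^ (b - l)
          ≤ (b+1).choose (l+1) * 2 ^ (b + 1 - (l+1)) := by
        rw [Nat.choose_succ_succ']
        rcases Nat.lt_or_ge b (l+1) with hb | hb
        · rcases Nat.lt_or_ge b l with hb2 | hb2
          · rw [Nat.choose_eq_zero_of_lt hb, Nat.choose_eq_zero_of_lt hb2]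
            simp
          · have hbl : b = l := by omega
            subst hbl
            rw [Nat.choose_eq_zero_of_lt hb, Nat.choose_self]
            simp
        · have e1 : b - (l+1) + 1 = b - l := by omega
          have e2 : b + 1 - (l+1) = b - l := by omega
          rw [e2, Nat.add_mul, ← e1, pow_succ]
          ring_nf
          omega
      calc ((strs b).filter (fun B' => (u :: U').Sublist (false :: B'))).card
            + ((strs b).filter (fun B' => (u :: U').Sublist (true :: B'))).card
          ≤ (((strs b).filter (fun B' => (u :: U').Sublist B')).card
              + (if u = false then ((strs b).filter (fun B' => U'.Sublist B')).card else 0))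
            + (((strs b).filter (fun B' => (u :: U').Sublist B')).card
              + (if u = true then ((strs b).filter (fun B' => U'.Sublist B')).card else 0)) :=
            Nat.add_le_add (key false) (key true)
        _ = 2 * ((strs b).filter (fun B' => (u :: U').Sublist B')).card
              + ((strs b).filter (fun B' => U'.Sublist B')).card := by
            rw [two_mul]; omega
        _ ≤ 2 * (b.choose ((U'.length) + 1) * 2 ^ (b - (U'.length + 1)))
              + b.choose U'.length * 2 ^ (b - U'.length) := by
            have := ih (u :: U')
            simp only [List.length_cons] at this
            exact Nat.add_le_add (Nat.mul_le_mul_left 2 this) (ih U')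
        _ ≤ (b+1).choose (U'.length+1) * 2 ^ (b + 1 - (U'.length+1)) := harith
        _ = (b+1).choose (u :: U').length * 2 ^ (b + 1 - (u :: U').length) := by
            simp


lemma card_superstrings_le (b : ℕ) (U : List Bool) (S : Finset (List Bool))
    (hS : ∀ B ∈ S, B.length = b ∧ U.Sublist B) :
    S.card ≤ b.choose U.length * 2 ^ (b - U.length) := by
  classical
  refine le_trans (Finset.card_le_card (fun B hB => ?_)) (card_superstrings_le_aux b U)
  obtain ⟨h1, h2⟩ := hS B hB
  exact Finset.mem_filter.mpr ⟨mem_strs.mpr h1, h2⟩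

/-! ### Numeric bounds -/

lemma pow_self_le_three_pow_mul_factorial : ∀ k : ℕ, k ^ k ≤ 3 ^ k * (Nat.factorial k) := by
  intro k
  induction k with
  | zero => simp
  | succ k ih =>
    have hstep : (k+1) ^ k ≤ 3 * k ^ k := by
      rcases Nat.eq_zero_or_pos k with hk | hk
      · subst hk; simp
      · have hR : ((k:ℝ)+1) ^ k ≤ 3 * (k:ℝ) ^ k := by
          have hk0 : (0:ℝ) < k := by exact_mod_cast hk
          have h1 : ((k:ℝ)+1) = k * (1 + 1/k) := by field_simp
          rw [h1, mul_pow]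
          have h3 : (1 + 1/(k:ℝ)) ≤ Real.exp (1/k) := by
            have := Real.add_one_le_exp (1/(k:ℝ)); linarith
          have h2 : (1 + 1/(k:ℝ)) ^ k ≤ Real.exp 1 := by
            calc (1 + 1/(k:ℝ)) ^ k ≤ Real.exp (1/k) ^ k := by
                  apply pow_le_pow_left₀ (by positivity) h3
              _ = Real.exp (k * (1/k)) := by rw [← Real.exp_nat_mul]
              _ = Real.exp 1 := by rw [mul_one_div, div_self (ne_of_gt hk0)]
          have h4 : Real.exp 1 ≤ 3 := le_of_lt (lt_trans Real.exp_one_lt_d9 (by norm_num))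
          calc (k:ℝ)^k * (1+1/(k:ℝ))^k ≤ (k:ℝ)^k * 3 := by
                apply mul_le_mul_of_nonneg_left (h2.trans h4) (by positivity)
            _ = 3 * (k:ℝ)^k := by ring
        have hcast : ((k:ℝ)+1) ^ k = (((k+1)^k : ℕ) : ℝ) := by push_cast; ring
        rw [hcast] at hR
        exact_mod_cast hR
    calc (k+1)^(k+1) = (k+1) * (k+1)^k := by rw [pow_succ]; ring
      _ ≤ (k+1) * (3 * k^k) := Nat.mul_le_mul_left _ hstep
      _ ≤ (k+1) * (3 * (3^k * Nat.factorial k)) :=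
          Nat.mul_le_mul_left _ (Nat.mul_le_mul_left 3 ih)
      _ = 3^(k+1) * Nat.factorial (k+1) := by rw [Nat.factorial_succ, pow_succ]; ring


lemma choose_le_900 {s k : ℕ} (h : s ≤ 300 * k) (hk : 0 < k) : s.choose k ≤ 900 ^ k := by
  have h1 : s.choose k * Nat.factorial k ≤ s ^ k := by
    rw [mul_comm, ← Nat.descFactorial_eq_factorial_mul_choose]
    exact Nat.descFactorial_le_pow s k
  have h2 : s.choose k * k ^ k ≤ 900 ^ k * k ^ k := by
    calc s.choose k * k ^ k ≤ s.choose k * (3 ^ k * Nat.factorial k) :=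
          Nat.mul_le_mul_left _ (pow_self_le_three_pow_mul_factorial k)
      _ = 3 ^ k * (s.choose k * Nat.factorial k) := by ring
      _ ≤ 3 ^ k * s ^ k := Nat.mul_le_mul_left _ h1
      _ ≤ 3 ^ k * (300 * k) ^ k := Nat.mul_le_mul_left _ (Nat.pow_le_pow_left h k)
      _ = 900 ^ k * k ^ k := by rw [mul_pow, ← mul_assoc, ← mul_pow]; norm_num
  exact Nat.le_of_mul_le_mul_right h2 (Nat.pow_pos hk)


lemma choose_mono_left {n r t : ℕ} (hrt : r ≤ t) (ht : 2 * t ≤ n) : n.choose r ≤ n.choose t := by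
  induction t with
  | zero => simp_all
  | succ t ih =>
    rcases Nat.lt_or_ge r (t+1) with h | h
    · refine le_trans (ih (by omega) (by omega)) ?_
      exact Nat.choose_le_succ_of_lt_half_left (by omega)
    · have : r = t+1 := by omega
      subst this; exact le_refl _


lemma choose_pair_le (a b L : ℕ) : a.choose L * b.choose L ≤ (a+b).choose (a + b - 2*L) := by
  rcases Nat.lt_or_ge a L with h | ha
  · rw [Nat.choose_eq_zero_of_lt h]; simp
  rcases Nat.lt_or_ge b L with h | hb
  · rw [Nat.choose_eq_zero_of_lt h]; simp
  have key : a.choose (a-L) * b.choose (b-L) ≤ (a+b).choose ((a-L)+(b-L)) := by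
    rw [Nat.add_choose_eq]
    refine Finset.single_le_sum (f := fun p : ℕ × ℕ => a.choose p.1 * b.choose p.2)
      (a := (a - L, b - L)) (fun p _ => Nat.zero_le _) ?_
    simp [Finset.mem_antidiagonal]
  have heq : (a-L)+(b-L) = a + b - 2*L := by omega
  rw [← heq, ← Nat.choose_symm ha, ← Nat.choose_symm hb]
  exact key


lemma bern (t : ℕ) : (100 + t) * 100 ^ t ≤ 100 * 101 ^ t := by
  induction t with
  | zero => simp
  | succ t ih =>
    have h2 : 100^(t+1) ≤ 100 * 101^t := by
      rw [pow_succ]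
      calc 100^t * 100 ≤ 101^t * 100 :=
            Nat.mul_le_mul_right _ (Nat.pow_le_pow_left (by norm_num) t)
        _ = 100 * 101^t := by ring
    calc (100 + (t+1)) * 100^(t+1) = 100 * ((100+t) * 100^t) + 100^(t+1) := by ring
      _ ≤ 100 * (100 * 101^t) + 100 * 101^t :=
          Nat.add_le_add (Nat.mul_le_mul_left _ ih) h2
      _ = 100 * 101^(t+1) := by rw [pow_succ]; ring


/-- `Lw s` : the length of the forced common-subsequence witness at scale `s`. -/
def Lw (s : ℕ) : ℕ := (s - s/100 + 2)/2

/-- `Dn s` : the per-pair pattern-count bound at scale `s`. -/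
def Dn (s : ℕ) : ℕ := s.choose (s/100 - 1) * 2 ^ (s - Lw s)

lemma per_s_nat {s : ℕ} (hs : 100 ≤ s) :
    128 * (s * Dn s) * 16 ^ (s-1) * 8 ^ (s-100) ≤ 31 ^ (s-1) * 7 ^ (s-100) := by
  obtain ⟨t, ht⟩ : ∃ t, s = 100 + t := ⟨s - 100, by omega⟩
  have e1 : s - 1 = 99 + t := by omega
  have e2 : s - 100 = t := by omega
  rw [e1, e2]
  set k := s/100 - 1 with hk
  set d := s - Lw s with hd
  have hDn : Dn s = s.choose k * 2 ^ d := rfl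
  rw [hDn]
  have hLw : Lw s = (s - s/100 + 2)/2 := rfl
  have hkt : k * 200 ≤ 2 * t := by omega
  have hdt : d * 200 ≤ 101 * s := by omega
  have hC : s.choose k ≤ 900 ^ k := by
    rcases Nat.eq_zero_or_pos k with hk0 | hk0
    · rw [hk0]; simp
    · exact choose_le_900 (by omega) hk0
  have step1 : 128 * (s * (s.choose k * 2 ^ d)) * 16 ^ (99+t) * 8 ^ t
      ≤ 128 * (s * (900 ^ k * 2 ^ d)) * 16 ^ (99+t) * 8 ^ t := by
    have w1 := Nat.mul_le_mul_right (2^d) hC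
    have w2 := Nat.mul_le_mul_left s w1
    have w3 := Nat.mul_le_mul_left 128 w2
    exact Nat.mul_le_mul_right _ (Nat.mul_le_mul_right _ w3)
  refine le_trans step1 ?_
  set P := 128 * (s * (900 ^ k * 2 ^ d)) * 16 ^ (99+t) * 8 ^ t with hP
  set Q := 31 ^ (99+t) * 7 ^ t with hQ
  by_contra hcon
  push_neg at hcon
  have hQP : Q ^ 200 < P ^ 200 := Nat.pow_lt_pow_left hcon (by norm_num)
  have hmain : P ^ 200 * 100 ^ (t * 200) ≤ Q ^ 200 * 100 ^ (t * 200) := by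
    have hbern : s * 100 ^ t ≤ 100 * 101 ^ t := by rw [ht]; exact bern t
    have eL : P ^ 200 * 100 ^ (t * 200)
        = 128^200 * (s * 100^t)^200 * 900^(k*200) * 2^(d*200)
            * (16^(99+t))^200 * (8^t)^200 := by
      rw [hP]; ring
    have eR : Q ^ 200 * 100 ^ (t * 200)
        = (31^19800 : ℕ) * (31^(200*t) * 7^(200*t) * 100^(200*t)) := by
      rw [hQ, show (31:ℕ)^19800 = (31^99)^200 by rw [← pow_mul]]; ring
    rw [eL, eR]
    have he3 : 101 * s = 10100 + 101 * t := by omega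
    have hper1 : (101:ℕ)^(200*t) * 900^(2*t) * 2^(101*t) * 16^(200*t) * 8^(200*t)
        = (101^200 * 900^2 * 2^101 * 16^200 * 8^200)^t := by
      rw [pow_mul, pow_mul, pow_mul, pow_mul, pow_mul,
        ← mul_pow, ← mul_pow, ← mul_pow, ← mul_pow]
    have hper2 : (31:ℕ)^(200*t) * 7^(200*t) * 100^(200*t)
        = (31^200 * 7^200 * 100^200)^t := by
      rw [pow_mul, pow_mul, pow_mul, ← mul_pow, ← mul_pow]
    calc 128^200 * (s * 100^t)^200 * 900^(k*200) * 2^(d*200) * (16^(99+t))^200 * (8^t)^200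
        ≤ 128^200 * (100 * 101^t)^200 * 900^(2*t) * 2^(10100 + 101*t)
            * (16^(99+t))^200 * (8^t)^200 := by
          rw [← he3]
          refine Nat.mul_le_mul_right _ (Nat.mul_le_mul_right _ ?_)
          refine Nat.mul_le_mul ?_ (Nat.pow_le_pow_right (by norm_num) hdt)
          refine Nat.mul_le_mul ?_ (Nat.pow_le_pow_right (by norm_num) hkt)
          exact Nat.mul_le_mul_left _ (Nat.pow_le_pow_left hbern 200)
      _ = (128^200 * 100^200 * 2^10100 * 16^19800)
            * (101^(200*t) * 900^(2*t) * 2^(101*t) * 16^(200*t) * 8^(200*t)) := by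
          rw [show (16:ℕ)^19800 = (16^99)^200 by rw [← pow_mul]]; ring
      _ ≤ (31^19800 : ℕ) * (31^(200*t) * 7^(200*t) * 100^(200*t)) := by
          rw [hper1, hper2]
          refine Nat.mul_le_mul ?_ (Nat.pow_le_pow_left ?_ t)
          · rw [show (128^200 * 100^200 * 2^10100 * 16^19800 : ℕ) = (128^2*100^2*2^101*16^198)^100 by rw [mul_pow, mul_pow, mul_pow, ← pow_mul, ← pow_mul, ← pow_mul, ← pow_mul], show (31^19800 : ℕ) = (31^198)^100 by rw [← pow_mul]]
            exact Nat.pow_le_pow_left (by norm_num) 100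
          · norm_num
  have := Nat.le_of_mul_le_mul_right hmain (Nat.pow_pos (by norm_num))
  omega


lemma per_s_real {s : ℕ} (hs : 100 ≤ s) :
    (s : ℝ) * Dn s * (16/31)^(s-1) ≤ (1/128) * (7/8)^(s-100) := by
  have h := per_s_nat hs
  have hcast : (128:ℝ) * ((s:ℝ) * (Dn s : ℕ)) * 16^(s-1) * 8^(s-100)
      ≤ 31^(s-1) * 7^(s-100) := by exact_mod_cast h
  have h31 : (0:ℝ) < 31^(s-1) := by positivity
  have key : ((s:ℝ) * Dn s * 16^(s-1)) * (128 * 8^(s-100)) ≤ 7^(s-100) * 31^(s-1) := by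
    calc ((s:ℝ) * Dn s * 16^(s-1)) * (128 * 8^(s-100))
        = 128 * ((s:ℝ) * (Dn s : ℕ)) * 16^(s-1) * 8^(s-100) := by ring
      _ ≤ 31^(s-1) * 7^(s-100) := hcast
      _ = 7^(s-100) * 31^(s-1) := by ring
  calc (s : ℝ) * Dn s * (16/31)^(s-1)
      = ((s:ℝ) * Dn s * 16^(s-1))/31^(s-1) := by rw [div_pow]; ring
    _ ≤ 7^(s-100)/(128 * 8^(s-100)) := by
        rw [div_le_div_iff₀ h31 (by positivity)]; exact key
    _ = (1/128) * (7/8)^(s-100) := by rw [div_pow]; ring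

lemma geom_tail_le (M : ℕ) : ∑ u ∈ Finset.range M, ((7:ℝ)/8)^u ≤ 8 := by
  induction M with
  | zero => simp
  | succ M ih =>
    rw [Finset.sum_range_succ']
    have he : ∀ u : ℕ, ((7:ℝ)/8)^(u+1) = (7/8) * (7/8)^u := fun u => by rw [pow_succ]; ring
    have : ∑ u ∈ Finset.range M, ((7:ℝ)/8)^(u+1)
        = (7/8) * ∑ u ∈ Finset.range M, ((7:ℝ)/8)^u := by
      rw [Finset.mul_sum]
      exact Finset.sum_congr rfl (fun u _ => he u)
    rw [this]
    have h78 : (7:ℝ)/8 * ∑ u ∈ Finset.range M, ((7:ℝ)/8)^u ≤ (7/8) * 8 := by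
      apply mul_le_mul_of_nonneg_left ih (by norm_num)
    simp only [pow_zero]
    linarith

/-! ### Extraction of a violation witness -/

lemma bad_witness {n : ℕ} {T : List Bool} (hlen : T.length = n+1)
    (hpre : GoodL (T.take n)) (hbad : ¬ GoodL T) :
    ∃ i j, 1 ≤ i ∧ i < j ∧ j ≤ n+1 ∧ 100 ≤ n+2-i ∧
      ∃ U : List Bool, U.length = Lw (n+2-i) ∧
        U.Sublist (strSlice T i j) ∧ U.Sublist (strSlice T j (n+2)) := by
  unfold GoodL at hbad
  push_neg at hbad
  obtain ⟨i, j, k, h1, h2, h3, h4, h5⟩ := hbad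
  rw [hlen] at h4
  have hk : k = n+2 := by
    by_contra hne
    have hgk := hpre i j k h1 h2 h3 (by rw [List.length_take]; omega)
    rw [strSlice_take T n i j h1 (by omega), strSlice_take T n j k (by omega) (by omega)] at hgk
    omega
  subst hk
  have hlen1 : (strSlice T i j).length = j - i := length_strSlice T i j h1 (by omega)
  have hlen2 : (strSlice T j (n+2)).length = n+2-j :=
    length_strSlice T j (n+2) (by omega) (by omega)
  have hED := editDistance_add (strSlice T i j) (strSlice T j (n+2))
  rw [hlen1, hlen2] at hED
  obtain ⟨U0, hU0len, hU0S, hU0T⟩ := exists_lcs (strSlice T i j) (strSlice T j (n+2))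
  have hLw : Lw (n+2-i) = ((n+2-i) - (n+2-i)/100 + 2)/2 := rfl
  refine ⟨i, j, h1, h2, by omega, by omega, U0.take (Lw (n+2-i)), ?_,
    (List.take_sublist _ _).trans hU0S, (List.take_sublist _ _).trans hU0T⟩
  rw [List.length_take]
  omega

/-! ### The per-pair counting bound -/

open Classical in
lemma card_V_le (n i j : ℕ) (h1 : 1 ≤ i) (h2 : i < j) (h3 : j ≤ n+1)
    (S : Finset (List Bool))
    (hS : ∀ T ∈ S, T.length = n+1 ∧ GoodL (T.take (i-1)) ∧
        ∃ U : List Bool, U.length = Lw (n+2-i) ∧ U.Sublist (strSlice T i j)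
          ∧ U.Sublist (strSlice T j (n+2))) :
    S.card ≤ N (i-1) * Dn (n+2-i) := by
  classical
  set s := n+2-i with hs
  set a := j-i with ha
  set b := n+2-j with hb
  set L := Lw s with hL
  -- step 1 : cover by a union over the possible witnesses U
  have hsub : S ⊆ (strs L).biUnion (fun U => (strs (n+1)).filter (fun T =>
      GoodL (T.take (i-1)) ∧
        (U.Sublist (strSlice T i j) ∧ U.Sublist (strSlice T j (n+2))))) := by
    intro T hT
    obtain ⟨hT1, hT2, U, hU1, hU2, hU3⟩ := hS T hT
    refine Finset.mem_biUnion.mpr ⟨U, mem_strs.mpr hU1, ?_⟩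
    simp only [Finset.mem_filter, mem_strs]
    exact ⟨hT1, hT2, hU2, hU3⟩
  refine le_trans (Finset.card_le_card hsub) ?_
  refine le_trans (Finset.card_biUnion_le) ?_
  -- step 2 : bound each W U
  have hW : ∀ U ∈ strs L, ((strs (n+1)).filter (fun T => GoodL (T.take (i-1)) ∧
      (U.Sublist (strSlice T i j) ∧ U.Sublist (strSlice T j (n+2))))).card
      ≤ N (i-1) * ((a.choose L * 2^(a-L)) * (b.choose L * 2^(b-L))) := by
    intro U hU
    have hUlen : U.length = L := mem_strs.mp hU
    have step1 : ((strs (n+1)).filter (fun T => GoodL (T.take (i-1)) ∧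
        (U.Sublist (strSlice T i j) ∧ U.Sublist (strSlice T j (n+2))))).card
        ≤ ((strs (i-1)).filter GoodL).card *
          ((strs (a+b)).filter (fun R => U.Sublist (R.take a)
            ∧ U.Sublist ((R.drop a).take b))).card := by
      apply card_le_split (i-1) (a+b) GoodL
        (fun R => U.Sublist (R.take a) ∧ U.Sublist ((R.drop a).take b))
      intro T hT
      simp only [Finset.mem_filter, mem_strs] at hT
      obtain ⟨hT1, hT2, hT3, hT4⟩ := hT
      refine ⟨by omega, hT2, ?_, ?_⟩
      · exact hT3
      · have e2 : strSlice T j (n+2) = ((T.drop (i-1)).drop a).take b := by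
          show (T.drop (j-1)).take (n+2-j) = _
          rw [List.drop_drop]
          congr 2
          omega
        rw [← e2]
        exact hT4
    refine le_trans step1 ?_
    have hN : ((strs (i-1)).filter GoodL).card = N (i-1) := rfl
    rw [hN]
    refine Nat.mul_le_mul_left _ ?_
    have step2 : ((strs (a+b)).filter (fun R => U.Sublist (R.take a)
        ∧ U.Sublist ((R.drop a).take b))).card
        ≤ ((strs a).filter (fun X => U.Sublist X)).card *
          ((strs b).filter (fun Y => U.Sublist Y)).card := by
      apply card_le_split a b (fun X => U.Sublist X) (fun Y => U.Sublist Y)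
      intro R hR
      simp only [Finset.mem_filter, mem_strs] at hR
      obtain ⟨hR1, hR2, hR3⟩ := hR
      refine ⟨hR1, hR2, ?_⟩
      have : (R.drop a).take b = R.drop a := by
        apply List.take_of_length_le
        rw [List.length_drop]
        omega
      rwa [this] at hR3
    refine le_trans step2 ?_
    have hA : ((strs a).filter (fun X => U.Sublist X)).card ≤ a.choose L * 2^(a-L) := by
      have := card_superstrings_le a U ((strs a).filter (fun X => U.Sublist X))
        (fun B hB => by
          simp only [Finset.mem_filter, mem_strs] at hB
          exact hB)
      rwa [hUlen] at this
    have hB : ((strs b).filter (fun Y => U.Sublist Y)).card ≤ b.choose L * 2^(b-L) := by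
      have := card_superstrings_le b U ((strs b).filter (fun Y => U.Sublist Y))
        (fun B hB => by
          simp only [Finset.mem_filter, mem_strs] at hB
          exact hB)
      rwa [hUlen] at this
    exact Nat.mul_le_mul hA hB
  refine le_trans (Finset.sum_le_sum hW) ?_
  rw [Finset.sum_const, smul_eq_mul]
  -- step 3 : arithmetic
  have hcard := card_strs_le L
  rcases Nat.lt_or_ge a L with hxa | hxa
  · rw [Nat.choose_eq_zero_of_lt hxa]
    simp
  rcases Nat.lt_or_ge b L with hxb | hxb
  · rw [Nat.choose_eq_zero_of_lt hxb]
    simp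
  have hDn : Dn s = s.choose (s/100 - 1) * 2 ^ (s - L) := rfl
  have hchoose : a.choose L * b.choose L ≤ s.choose (s/100 - 1) := by
    refine le_trans (choose_pair_le a b L) ?_
    have hab : a + b = s := by omega
    rw [hab]
    apply choose_mono_left
    · have : 2 * L ≥ s - s/100 + 1 := by rw [hL]; unfold Lw; omega
      omega
    · omega
  calc (strs L).card * (N (i-1) * ((a.choose L * 2^(a-L)) * (b.choose L * 2^(b-L))))
      ≤ 2^L * (N (i-1) * ((a.choose L * 2^(a-L)) * (b.choose L * 2^(b-L)))) :=
        Nat.mul_le_mul_right _ hcard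
    _ = N (i-1) * ((a.choose L * b.choose L) * (2^L * 2^(a-L) * 2^(b-L))) := by ring
    _ = N (i-1) * ((a.choose L * b.choose L) * 2^(s-L)) := by
        rw [← pow_add, ← pow_add]
        congr 3
        omega
    _ ≤ N (i-1) * (s.choose (s/100 - 1) * 2^(s-L)) :=
        Nat.mul_le_mul_left _ (Nat.mul_le_mul_right _ hchoose)
    _ = N (i-1) * Dn s := by rw [hDn]

/-! ### The bad-set bound -/

open Classical in
lemma card_bad_le (n : ℕ) :
    ((strs (n+1)).filter (fun T => GoodL (T.take n) ∧ ¬ GoodL T)).card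
      ≤ ∑ i ∈ Finset.Icc 1 (n-98), (n+1-i) * (N (i-1) * Dn (n+2-i)) := by
  classical
  have hsub : ((strs (n+1)).filter (fun T => GoodL (T.take n) ∧ ¬ GoodL T))
      ⊆ (Finset.Icc 1 (n-98)).biUnion (fun i => (Finset.Ioo i (n+2)).biUnion (fun j =>
          (strs (n+1)).filter (fun T => GoodL (T.take (i-1)) ∧
            ∃ U : List Bool, U.length = Lw (n+2-i) ∧ U.Sublist (strSlice T i j)
              ∧ U.Sublist (strSlice T j (n+2))))) := by
    intro T hT
    simp only [Finset.mem_filter] at hT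
    obtain ⟨hT1, hT2, hT3⟩ := hT
    obtain ⟨i, j, hi1, hij, hj, hs100, U, hU⟩ := bad_witness (mem_strs.mp hT1) hT2 hT3
    refine Finset.mem_biUnion.mpr ⟨i, Finset.mem_Icc.mpr ⟨hi1, by omega⟩, ?_⟩
    refine Finset.mem_biUnion.mpr ⟨j, Finset.mem_Ioo.mpr ⟨hij, by omega⟩, ?_⟩
    simp only [Finset.mem_filter]
    refine ⟨hT1, ?_, U, hU⟩
    have : T.take (i-1) = (T.take n).take (i-1) := by
      rw [List.take_take]
      congr 1
      omega
    rw [this]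
    exact hT2.take (i-1)
  refine le_trans (Finset.card_le_card hsub) ?_
  refine le_trans (Finset.card_biUnion_le) ?_
  apply Finset.sum_le_sum
  intro i hi
  refine le_trans (Finset.card_biUnion_le) ?_
  have hii : 1 ≤ i ∧ i ≤ n - 98 := Finset.mem_Icc.mp hi
  have hbound : ∀ j ∈ Finset.Ioo i (n+2),
      ((strs (n+1)).filter (fun T => GoodL (T.take (i-1)) ∧
        ∃ U : List Bool, U.length = Lw (n+2-i) ∧ U.Sublist (strSlice T i j)
          ∧ U.Sublist (strSlice T j (n+2)))).card ≤ N (i-1) * Dn (n+2-i) := by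
    intro j hj
    have hjj := Finset.mem_Ioo.mp hj
    apply card_V_le n i j hii.1 hjj.1 (by omega)
    intro T hT
    simp only [Finset.mem_filter, mem_strs] at hT
    exact ⟨hT.1, hT.2⟩
  refine le_trans (Finset.sum_le_sum hbound) ?_
  rw [Finset.sum_const, smul_eq_mul, Nat.card_Ioo]
  apply Nat.mul_le_mul_right
  omega

/-! ### The main induction -/

lemma N_zero : N 0 = 1 := by
  classical
  show ((strs 0).filter GoodL).card = 1
  rw [show strs 0 = {[]} from rfl, Finset.filter_singleton, if_pos goodL_nil]
  rfl

open Classical in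
lemma two_N_le (n : ℕ) : 2 * N n ≤ N (n+1)
    + ((strs (n+1)).filter (fun T => GoodL (T.take n) ∧ ¬ GoodL T)).card := by
  classical
  have hinj : (((strs n).filter GoodL) ×ˢ (Finset.univ : Finset Bool)).card
      ≤ ((strs (n+1)).filter (fun T => GoodL (T.take n))).card := by
    apply Finset.card_le_card_of_injOn (fun P => P.1 ++ [P.2])
    · rintro ⟨P, c⟩ hP
      simp only [Finset.mem_coe, Finset.mem_product, Finset.mem_filter, mem_strs] at hP
      obtain ⟨⟨hP1, hP2⟩, -⟩ := hP
      simp only [Finset.mem_coe, Finset.mem_filter, mem_strs, List.length_append]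
      constructor
      · simp [mem_strs, hP1]
      · have : (P ++ [c]).take n = P := by
          rw [← hP1, List.take_left]
        rw [this]
        exact hP2
    · rintro ⟨P1, c1⟩ hP1 ⟨P2, c2⟩ hP2 heq
      simp only [Finset.mem_coe, Finset.mem_product, Finset.mem_filter, mem_strs] at hP1 hP2
      have hlen : P1.length = P2.length := by rw [hP1.1.1, hP2.1.1]
      obtain ⟨h1, h2⟩ := List.append_inj heq hlen
      simp only [List.cons.injEq] at h2
      simp only [Prod.mk.injEq]
      exact ⟨h1, h2.1⟩
  have hcardprod : (((strs n).filter GoodL) ×ˢ (Finset.univ : Finset Bool)).card = 2 * N n := by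
    rw [Finset.card_product]
    simp [N, mul_comm]
  have hsplit : ((strs (n+1)).filter (fun T => GoodL (T.take n))).card
      ≤ N (n+1) + ((strs (n+1)).filter (fun T => GoodL (T.take n) ∧ ¬ GoodL T)).card := by
    have hsub2 : ((strs (n+1)).filter (fun T => GoodL (T.take n)))
        ⊆ ((strs (n+1)).filter GoodL)
          ∪ ((strs (n+1)).filter (fun T => GoodL (T.take n) ∧ ¬ GoodL T)) := by
      intro T hT
      simp only [Finset.mem_filter] at hT
      by_cases hG : GoodL T
      · exact Finset.mem_union_left _ (Finset.mem_filter.mpr ⟨hT.1, hG⟩)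
      · exact Finset.mem_union_right _ (Finset.mem_filter.mpr ⟨hT.1, hT.2, hG⟩)
    exact le_trans (Finset.card_le_card hsub2) (Finset.card_union_le _ _)
  -- combine
  calc 2 * N n = (((strs n).filter GoodL) ×ˢ (Finset.univ : Finset Bool)).card := hcardprod.symm
    _ ≤ ((strs (n+1)).filter (fun T => GoodL (T.take n))).card := hinj
    _ ≤ _ := hsplit

open Classical in
lemma N_succ_ge : ∀ n : ℕ, (31/16 : ℝ) * N n ≤ N (n+1) := by
  intro n
  induction n using Nat.strong_induction_on with
  | _ n ih =>
  classical
  -- chained lower bounds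
  have chain : ∀ d p : ℕ, p + d = n → (N p : ℝ) * (31/16)^d ≤ N n := by
    intro d
    induction d with
    | zero =>
      intro p hp
      have : p = n := by omega
      subst this
      simp
    | succ d ihd =>
      intro p hp
      have h1 : (31/16 : ℝ) * N p ≤ N (p+1) := ih p (by omega)
      have h2 : (N (p+1) : ℝ) * (31/16)^d ≤ N n := ihd (p+1) (by omega)
      calc (N p : ℝ) * (31/16)^(d+1) = ((31/16) * N p) * (31/16)^d := by ring
        _ ≤ (N (p+1) : ℝ) * (31/16)^d :=
            mul_le_mul_of_nonneg_right h1 (by positivity)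
        _ ≤ N n := h2
  have hNsmall : ∀ s : ℕ, 1 ≤ s → s ≤ n+1 → (N (n+1-s) : ℝ) ≤ (16/31)^(s-1) * N n := by
    intro s hs1 hs2
    have hc := chain (s-1) (n+1-s) (by omega)
    have hpow : (0:ℝ) < (31/16)^(s-1) := by positivity
    rw [← le_div_iff₀ hpow] at hc
    calc (N (n+1-s) : ℝ) ≤ N n / (31/16)^(s-1) := hc
      _ = (16/31)^(s-1) * N n := by
          rw [div_eq_mul_inv, ← inv_pow]
          norm_num [mul_comm]
  -- the bad set bound, in ℝ
  set Bc := ((strs (n+1)).filter (fun T => GoodL (T.take n) ∧ ¬ GoodL T)).card with hBc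
  have hBr : (Bc : ℝ) ≤ (1/16) * N n := by
    have h1 : (Bc : ℝ) ≤ ∑ i ∈ Finset.Icc 1 (n-98),
        (((n+1-i) * (N (i-1) * Dn (n+2-i)) : ℕ) : ℝ) := by
      have hb := card_bad_le n
      rw [hBc]
      exact_mod_cast hb
    have h2 : ∀ i ∈ Finset.Icc 1 (n-98),
        (((n+1-i) * (N (i-1) * Dn (n+2-i)) : ℕ) : ℝ)
          ≤ ((1/128) * (7/8)^((n-98)-i)) * N n := by
      intro i hi
      obtain ⟨hi1, hi2⟩ := Finset.mem_Icc.mp hi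
      have hn99 : 99 ≤ n := by omega
      set s := n+2-i with hs
      have hs100 : 100 ≤ s := by omega
      have hsn : s ≤ n+1 := by omega
      have hie : i - 1 = n+1-s := by omega
      have hNs : (N (i-1) : ℝ) ≤ (16/31)^(s-1) * N n := by
        rw [hie]
        exact hNsmall s (by omega) hsn
      have hterm : (((n+1-i) : ℕ) : ℝ) ≤ (s : ℝ) := by
        have : (n+1-i : ℕ) ≤ s := by omega
        exact_mod_cast this
      have hNnn : (0:ℝ) ≤ N n := by positivity
      push_cast
      calc (((n+1-i):ℕ) : ℝ) * ((N (i-1) : ℝ) * (Dn s : ℝ))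
          ≤ (s : ℝ) * (N (i-1) * Dn s) := by
            apply mul_le_mul_of_nonneg_right hterm (by positivity)
        _ = (s : ℝ) * Dn s * N (i-1) := by ring
        _ ≤ (s : ℝ) * Dn s * ((16/31)^(s-1) * N n) := by
            apply mul_le_mul_of_nonneg_left hNs (by positivity)
        _ = ((s : ℝ) * Dn s * (16/31)^(s-1)) * N n := by ring
        _ ≤ ((1/128) * (7/8)^(s-100)) * N n :=
            mul_le_mul_of_nonneg_right (per_s_real hs100) hNnn
        _ = ((1/128) * (7/8)^((n-98)-i)) * N n := by
            rw [show s - 100 = (n-98) - i from by omega]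
    have h3 : ∑ i ∈ Finset.Icc 1 (n-98), (((1/128) * (7/8)^((n-98)-i)) * N n : ℝ)
        ≤ (1/16) * N n := by
      set M := n - 98 with hM
      have hre : ∑ i ∈ Finset.Icc 1 M, ((7:ℝ)/8)^(M-i) ≤ ∑ u ∈ Finset.range M, ((7:ℝ)/8)^u := by
        have hinj : ∀ x ∈ Finset.Icc 1 M, ∀ y ∈ Finset.Icc 1 M,
            M - x = M - y → x = y := by
          intro x hx y hy hxy
          simp only [Finset.mem_Icc] at hx hy
          omega
        have himg := Finset.sum_image (s := Finset.Icc 1 M) (f := fun u => ((7:ℝ)/8)^u)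
          (g := fun i => M - i) hinj
        rw [← himg]
        apply Finset.sum_le_sum_of_subset_of_nonneg
        · intro u hu
          simp only [Finset.mem_image, Finset.mem_Icc] at hu
          obtain ⟨x, hx, rfl⟩ := hu
          exact Finset.mem_range.mpr (by omega)
        · intro u _ _
          positivity
      have hgeom := geom_tail_le M
      have hNnn : (0:ℝ) ≤ N n := by positivity
      calc ∑ i ∈ Finset.Icc 1 M, (((1/128) * (7/8)^(M-i)) * N n : ℝ)
          = ((1/128) * N n) * ∑ i ∈ Finset.Icc 1 M, ((7:ℝ)/8)^(M-i) := by
            rw [Finset.mul_sum]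
            apply Finset.sum_congr rfl
            intro i _
            ring
        _ ≤ ((1/128) * N n) * 8 := by
            apply mul_le_mul_of_nonneg_left (le_trans hre hgeom) (by positivity)
        _ = (1/16) * N n := by ring
    exact le_trans h1 (le_trans (Finset.sum_le_sum h2) h3)
  have htwo := two_N_le n
  have htwoR : (2 : ℝ) * N n ≤ (N (n+1) : ℝ) + Bc := by exact_mod_cast htwo
  linarith

lemma N_pos : ∀ n, 0 < N n := by
  intro n
  induction n with
  | zero => rw [N_zero]; norm_num
  | succ n ih =>
    have h := N_succ_ge n
    have h2 : (0:ℝ) < (31/16) * N n := by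
      have : (0:ℝ) < N n := by exact_mod_cast ih
      linarith
    have : (0:ℝ) < N (n+1) := lt_of_lt_of_le h2 h
    exact_mod_cast this

lemma exists_good (n : ℕ) : ∃ T : List Bool, GoodL T ∧ T.length = n := by
  classical
  have hpos : 0 < ((strs n).filter GoodL).card := N_pos n
  obtain ⟨T, hT⟩ := Finset.card_pos.mp hpos
  exact ⟨T, (Finset.mem_filter.mp hT).2, mem_strs.mp (Finset.mem_filter.mp hT).1⟩

/-! ### König's lemma: building the infinite word -/

def Viable (T : List Bool) : Prop :=
  ∀ n : ℕ, ∃ T' : List Bool, GoodL T' ∧ T'.length = T.length + n ∧ T <+: T'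

lemma good_of_viable {T : List Bool} (h : Viable T) : GoodL T := by
  obtain ⟨T', hg, hl, hp⟩ := h 0
  have : T = T' := List.IsPrefix.eq_of_length hp (by omega)
  exact this ▸ hg

lemma viable_nil : Viable [] := by
  intro n
  obtain ⟨T, hTg, hTl⟩ := exists_good n
  exact ⟨T, hTg, by simpa using hTl, List.nil_prefix⟩

lemma viable_step {T : List Bool} (h : Viable T) : ∃ c : Bool, Viable (T ++ [c]) := by
  by_contra hcon
  push_neg at hcon
  have hex : ∀ c : Bool, ∃ m : ℕ, ∀ T' : List Bool,
      GoodL T' → T'.length = (T ++ [c]).length + m → ¬ (T ++ [c]) <+: T' := by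
    intro c
    have hv := hcon c
    unfold Viable at hv
    push_neg at hv
    exact hv
  obtain ⟨m0, hm0⟩ := hex false
  obtain ⟨m1, hm1⟩ := hex true
  obtain ⟨T', hg, hl, hp⟩ := h (max m0 m1 + 1)
  obtain ⟨R, rfl⟩ := hp
  have hR : R ≠ [] := by
    intro hmt
    rw [hmt] at hl
    simp only [List.append_nil] at hl
    omega
  obtain ⟨c, R', rfl⟩ := List.exists_cons_of_ne_nil hR
  have hRlen : R'.length = max m0 m1 := by
    simp only [List.length_append, List.length_cons] at hl
    omega
  have key : ∃ mc : ℕ, mc ≤ max m0 m1 ∧ ∀ T'' : List Bool, GoodL T'' →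
      T''.length = (T ++ [c]).length + mc → ¬ (T ++ [c]) <+: T'' := by
    cases c
    · exact ⟨m0, le_max_left _ _, hm0⟩
    · exact ⟨m1, le_max_right _ _, hm1⟩
  obtain ⟨mc, hmcle, hTc⟩ := key
  set T'' := (T ++ c :: R').take (T.length + 1 + mc) with hT''
  have hgood'' : GoodL T'' := hg.take _
  have hlen'' : T''.length = (T ++ [c]).length + mc := by
    rw [hT'', List.length_take]
    simp only [List.length_append, List.length_cons, List.length_singleton,
      List.length_nil]
    omega
  have hpre'' : (T ++ [c]) <+: T'' := by
    rw [hT'']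
    have hassoc : T ++ c :: R' = (T ++ [c]) ++ R' := by simp
    rw [hassoc]
    have hlen3 : T.length + 1 + mc = ((T ++ [c]) ++ R'.take mc).length := by
      simp only [List.length_append, List.length_cons, List.length_take,
        List.length_singleton, List.length_nil]
      omega
    have : ((T ++ [c]) ++ R').take (T.length + 1 + mc) = (T ++ [c]) ++ R'.take mc := by
      rw [hlen3]
      rw [show (T ++ [c]) ++ R' = ((T ++ [c]) ++ R'.take mc) ++ R'.drop mc from by
        conv_lhs => rw [← List.take_append_drop mc R']
        rw [← List.append_assoc]]
      exact List.take_left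
    rw [this]
    exact List.prefix_append _ _
  exact hTc T'' hgood'' hlen'' hpre''

noncomputable def chainT : (n : ℕ) → {T : List Bool // Viable T ∧ T.length = n}
  | 0 => ⟨[], viable_nil, rfl⟩
  | n+1 =>
    ⟨(chainT n).1 ++ [Classical.choose (viable_step (chainT n).2.1)],
     Classical.choose_spec (viable_step (chainT n).2.1),
     by
       have hc := (chainT n).2.2
       simp only [List.length_append, List.length_singleton]
       omega⟩

lemma chain_prefix_succ (n : ℕ) : (chainT n).1 <+: (chainT (n+1)).1 := by
  show (chainT n).1 <+: (chainT n).1 ++ _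
  exact List.prefix_append _ _

lemma chain_prefix {m n : ℕ} (h : m ≤ n) : (chainT m).1 <+: (chainT n).1 := by
  induction n with
  | zero =>
    have : m = 0 := by omega
    subst this
    exact List.prefix_rfl
  | succ n ih =>
    rcases Nat.lt_or_ge m (n+1) with h2 | h2
    · exact (ih (by omega)).trans (chain_prefix_succ n)
    · have : m = n+1 := by omega
      subst this
      exact List.prefix_rfl

noncomputable def infWord : ℕ → Bool := fun k => ((chainT k).1).getD (k-1) false

lemma infWord_eq {t n : ℕ} (h : t < n) :
    infWord (t+1) = ((chainT n).1).getD t false := by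
  unfold infWord
  have h1 : (chainT (t+1)).1.length = t+1 := (chainT (t+1)).2.2
  have h2 : (chainT n).1.length = n := (chainT n).2.2
  simp only [Nat.add_sub_cancel]
  rw [List.getD_eq_getElem _ _ (by omega), List.getD_eq_getElem _ _ (by omega)]
  exact List.IsPrefix.getElem (chain_prefix (show t+1 ≤ n by omega)) (by omega)

lemma islice_one (n : ℕ) : islice infWord 1 (n+1) = (chainT n).1 := by
  have h2 : (chainT n).1.length = n := (chainT n).2.2
  apply List.ext_getElem
  · simp [islice, h2]
  · intro t h1 h1'
    simp only [islice, List.getElem_map, List.getElem_range]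
    have ht : t < n := by omega
    rw [show 1 + t = t + 1 by omega, infWord_eq ht,
      List.getD_eq_getElem _ _ (by omega)]

lemma good_islice (n : ℕ) : GoodL (islice infWord 1 (n+1)) := by
  rw [islice_one]
  exact good_of_viable (chainT n).2.1

lemma strSlice_islice (f : ℕ → Bool) (i j k : ℕ) (h1 : 1 ≤ i) (h2 : i ≤ j) (h3 : j ≤ k) :
    strSlice (islice f 1 k) i j = islice f i j := by
  apply List.ext_getElem
  · simp only [strSlice, islice, List.length_take, List.length_drop, List.length_map,
      List.length_range]
    omega
  · intro t ha hb
    simp only [strSlice, islice, List.getElem_take, List.getElem_drop, List.getElem_map,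
      List.getElem_range]
    congr 1
    omega

end WeakSyncAux

/-- There exist `ε ∈ (0,1)` and an infinite binary string that is
an infinite weak ε-synchronization string. -/
theorem exists_infinite_binary_weak_sync_string :
    ∃ ε : ℝ, 0 < ε ∧ ε < 1 ∧ ∃ f : ℕ → Bool, IsInfWeakSyncString ε f := by
  refine ⟨99/100, by norm_num, by norm_num, WeakSyncAux.infWord, ?_⟩
  intro i j k h1 h2 h3
  have hk : k - 1 + 1 = k := by omega
  have hgood := WeakSyncAux.good_islice (k-1)
  rw [hk] at hgood
  have hlen : (islice WeakSyncAux.infWord 1 k).length = k - 1 := by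
    simp [islice]
  have hmain := hgood i j k h1 h2 h3 (by omega)
  rw [WeakSyncAux.strSlice_islice _ i j k h1 (by omega) (by omega),
      WeakSyncAux.strSlice_islice _ j k k (by omega) (by omega) le_rfl] at hmain
  have hsub : ((k:ℝ) - i) = ((k - i : ℕ) : ℝ) := by
    have hik : i ≤ k := by omega
    push_cast [hik]
    ring
  have h100 : (1 - 99/100 : ℝ) * ((k:ℝ) - i) = ((k-i : ℕ) : ℝ) / 100 := by
    rw [hsub]
    ring
  set q := (k-i)/100 with hq
  have hfloor : (⌊((k-i:ℕ):ℝ)/100⌋ : ℤ) = ((q : ℕ) : ℤ) := by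
    rw [Int.floor_eq_iff]
    constructor
    · have hx : (100 * q : ℕ) ≤ k - i := by omega
      have hxr := (Nat.cast_le (α := ℝ)).mpr hx
      push_cast at hxr ⊢
      linarith
    · have hx : (k - i : ℕ) < 100 * q + 100 := by omega
      have hxr := (Nat.cast_lt (α := ℝ)).mpr hx
      push_cast at hxr ⊢
      linarith
  rw [h100, hfloor]
  push_cast
  exact_mod_cast hmain
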